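/- arXiv:1904.13125 — 5 statements merged into one kernel-verified Lean document; each statement's English description precedes it below -/
import Mathlib

section
/- Lower bound on the quasi-optimality constant by the smoother norm (Remark 2.1): if C ≥ 0 is such that the quasi-optimality estimate ‖u_ℓ − U_ℓ‖ ≤ C·inf_{s ∈ S} ‖u_ℓ − s‖ holds for every continuous linear functional ℓ on V, then ‖E‖ ≤ 1 + C. -/
open scoped RealInnerProductSpace

/-- Lower bound on the quasi-optimality constant by the smoother norm (Remark 2.1):
if `C ≥ 0` is such that `‖u_ℓ − U_ℓ‖ ≤ C * inf_{s ∈ S} ‖u_ℓ − s‖` for every continuous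
linear functional `ℓ` on `V`, then `‖E‖ ≤ 1 + C`. -/
theorem stmt_2 {W : Type*} [NormedAddCommGroup W] [InnerProductSpace ℝ W]
    (V S : Submodule ℝ W) (hV : IsComplete (V : Set W)) [FiniteDimensional ℝ S]
    (E : S →L[ℝ] V)
    (usol : (V →L[ℝ] ℝ) → V)
    (husol : ∀ (ℓ : V →L[ℝ] ℝ) (w : V), ⟪(usol ℓ : W), (w : W)⟫ = ℓ w)
    (Usol : (V →L[ℝ] ℝ) → S)
    (hUsol : ∀ (ℓ : V →L[ℝ] ℝ) (σ : S), ⟪(Usol ℓ : W), (σ : W)⟫ = ℓ (E σ))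
    (C : ℝ) (hC : 0 ≤ C)
    (hqo : ∀ ℓ : V →L[ℝ] ℝ,
      ‖(usol ℓ : W) - (Usol ℓ : W)‖ ≤ C * Metric.infDist ((usol ℓ : W)) (S : Set W)) :
    ‖E‖ ≤ 1 + C := by
  refine E.opNorm_le_bound (by linarith) (fun σ => ?_)
  set ℓ : V →L[ℝ] ℝ := (innerSL ℝ ((E σ : W))).comp V.subtypeL with hℓ
  have hℓapp : ∀ w : V, ℓ w = ⟪(E σ : W), (w : W)⟫ := fun w => rfl
  -- usol ℓ = E σ
  have hu : (usol ℓ : W) = (E σ : W) := by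
    have h : ∀ w : V, ⟪(usol ℓ : W) - (E σ : W), (w : W)⟫ = 0 := by
      intro w
      rw [inner_sub_left, husol ℓ w, hℓapp w, real_inner_comm]
      ring
    have h2 := h (usol ℓ - E σ)
    rw [Submodule.coe_sub] at h2
    have h3 := inner_self_eq_zero.mp h2
    exact sub_eq_zero.mp h3
  -- key identity
  have h1 : ⟪(Usol ℓ : W), (σ : W)⟫ = ‖(E σ : W)‖ ^ 2 := by
    rw [hUsol, hℓapp, real_inner_self_eq_norm_sq]
  -- infDist bound
  have hinf : Metric.infDist ((usol ℓ : W)) (S : Set W) ≤ ‖(E σ : W)‖ := by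
    rw [hu]
    have := Metric.infDist_le_dist_of_mem (x := (E σ : W)) (show (0 : W) ∈ (S : Set W) from S.zero_mem)
    simpa [dist_eq_norm] using this
  have hUnorm : ‖(Usol ℓ : W)‖ ≤ (1 + C) * ‖(E σ : W)‖ := by
    have t1 : ‖(Usol ℓ : W)‖ ≤ ‖(usol ℓ : W)‖ + ‖(usol ℓ : W) - (Usol ℓ : W)‖ := by
      have := norm_sub_le ((usol ℓ : W)) ((usol ℓ : W) - (Usol ℓ : W))
      rwa [sub_sub_cancel] at this
    have t2 := hqo ℓ
    have t3 : C * Metric.infDist ((usol ℓ : W)) (S : Set W) ≤ C * ‖(E σ : W)‖ :=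
      mul_le_mul_of_nonneg_left hinf hC
    have t4 : ‖(usol ℓ : W)‖ = ‖(E σ : W)‖ := by rw [hu]
    nlinarith
  have hle : ‖(E σ : W)‖ ^ 2 ≤ (1 + C) * ‖(E σ : W)‖ * ‖(σ : W)‖ := by
    rw [← h1]
    calc ⟪(Usol ℓ : W), (σ : W)⟫ ≤ ‖(Usol ℓ : W)‖ * ‖(σ : W)‖ := real_inner_le_norm _ _
      _ ≤ (1 + C) * ‖(E σ : W)‖ * ‖(σ : W)‖ :=
        mul_le_mul_of_nonneg_right hUnorm (norm_nonneg _)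
  have hEnorm : ‖E σ‖ = ‖(E σ : W)‖ := rfl
  rw [hEnorm]
  have hσ : ‖σ‖ = ‖(σ : W)‖ := rfl
  rw [hσ]
  rcases eq_or_lt_of_le (norm_nonneg ((E σ : W))) with h0 | h0
  · rw [← h0]
    positivity
  · nlinarith
end

section
/- Necessity of algebraic consistency for quasi-optimality (eq. (2.5), necessity direction): if there exists a constant C ≥ 0 such that ‖u_ℓ − U_ℓ‖ ≤ C·inf_{s ∈ S} ‖u_ℓ − s‖ for every continuous linear functional ℓ on V, then ⟨s, Eσ⟩ = ⟨s, σ⟩ for every s ∈ V ∩ S and every σ ∈ S. -/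
open scoped RealInnerProductSpace

/-- Necessity of algebraic consistency for quasi-optimality (eq. (2.5), necessity direction):
if there is `C ≥ 0` with `‖u_ℓ − U_ℓ‖ ≤ C * inf_{s ∈ S} ‖u_ℓ − s‖` for every continuous linear
functional `ℓ` on `V`, then `⟪s, Eσ⟫ = ⟪s, σ⟫` for every `s ∈ V ∩ S` and every `σ ∈ S`. -/
theorem stmt_3 {W : Type*} [NormedAddCommGroup W] [InnerProductSpace ℝ W]
    (V S : Submodule ℝ W) (hV : IsComplete (V : Set W)) [FiniteDimensional ℝ S]
    (E : S →L[ℝ] V)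
    (usol : (V →L[ℝ] ℝ) → V)
    (husol : ∀ (ℓ : V →L[ℝ] ℝ) (w : V), ⟪(usol ℓ : W), (w : W)⟫ = ℓ w)
    (Usol : (V →L[ℝ] ℝ) → S)
    (hUsol : ∀ (ℓ : V →L[ℝ] ℝ) (σ : S), ⟪(Usol ℓ : W), (σ : W)⟫ = ℓ (E σ))
    (C : ℝ) (hC : 0 ≤ C)
    (hqo : ∀ ℓ : V →L[ℝ] ℝ,
      ‖(usol ℓ : W) - (Usol ℓ : W)‖ ≤ C * Metric.infDist ((usol ℓ : W)) (S : Set W)) :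
    ∀ s : W, s ∈ V → s ∈ S → ∀ σ : S, ⟪s, ((E σ : V) : W)⟫ = ⟪s, (σ : W)⟫ := by
  intro s hsV hsS σ
  set ℓ : V →L[ℝ] ℝ := (innerSL ℝ s).comp V.subtypeL with hℓ
  have hℓval : ∀ w : V, ℓ w = ⟪s, (w : W)⟫ := fun w => rfl
  -- usol ℓ = s
  have hus : (usol ℓ : W) = s := by
    have hd : (usol ℓ : W) - s ∈ V := V.sub_mem (usol ℓ).2 hsV
    have h1 := husol ℓ ⟨(usol ℓ : W) - s, hd⟩
    rw [hℓval] at h1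
    have : ⟪(usol ℓ : W) - s, (usol ℓ : W) - s⟫ = 0 := by
      rw [inner_sub_left]
      simp only at h1
      linarith
    have := inner_self_eq_zero.mp this
    exact sub_eq_zero.mp this
  -- infDist is 0
  have hinf : Metric.infDist ((usol ℓ : W)) (S : Set W) = 0 := by
    rw [hus]; exact Metric.infDist_zero_of_mem hsS
  have h2 := hqo ℓ
  rw [hinf, mul_zero] at h2
  have hUs : (Usol ℓ : W) = s := by
    have : ‖(usol ℓ : W) - (Usol ℓ : W)‖ = 0 := le_antisymm h2 (norm_nonneg _)
    have := sub_eq_zero.mp (norm_eq_zero.mp this)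
    rw [hus] at this; exact this.symm
  have h3 := hUsol ℓ σ
  rw [hUs, hℓval] at h3
  exact h3.symm
end

section
/- Equivalence of the consistency conditions (abstract form of Lemma 4.4): let u ∈ V and U ∈ S satisfy b(U, σ) = b(u, Eσ) for all σ ∈ S. Then the following three conditions are equivalent: (a) u ∈ Ẑ implies b(u − U, u − U) = 0; (b) u ∈ Ẑ implies U = Pu; (c) u ∈ Ẑ implies b(u, σ − Eσ) = 0 for all σ ∈ S. -/
/-- Cauchy–Schwarz for a symmetric positive-semidefinite bilinear form. -/
lemma cs_aux {W : Type*} [AddCommGroup W] [Module ℝ W]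
    (b : W →ₗ[ℝ] W →ₗ[ℝ] ℝ)
    (hsymm : ∀ x y : W, b x y = b y x)
    (hpsd : ∀ x : W, 0 ≤ b x x) (x y : W) :
    b x y ^ 2 ≤ b x x * b y y := by
  have h : ∀ t : ℝ, 0 ≤ b y y * (t * t) + (2 * b x y) * t + b x x := by
    intro t
    have h0 := hpsd (x + t • y)
    simp only [map_add, map_smul, LinearMap.add_apply, LinearMap.smul_apply,
      smul_eq_mul] at h0
    rw [hsymm y x] at h0
    nlinarith [h0]
  have hd := discrim_le_zero h
  rw [discrim] at hd
  nlinarith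

/-- If `b x x = 0` for a symmetric psd form, then `b x y = 0` for all `y`. -/
lemma bz_aux {W : Type*} [AddCommGroup W] [Module ℝ W]
    (b : W →ₗ[ℝ] W →ₗ[ℝ] ℝ)
    (hsymm : ∀ x y : W, b x y = b y x)
    (hpsd : ∀ x : W, 0 ≤ b x x) (x y : W) (hx : b x x = 0) :
    b x y = 0 := by
  have := cs_aux b hsymm hpsd x y
  nlinarith [hpsd y, sq_nonneg (b x y)]

/-- Equivalence of the consistency conditions (abstract form of Lemma 4.4): let `u ∈ V` and
`U ∈ S` satisfy `b U σ = b u (E σ)` for all `σ ∈ S`. Then the following are equivalent: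
(a) `u ∈ Ẑ → b (u − U) (u − U) = 0`; (b) `u ∈ Ẑ → U = Pu`;
(c) `u ∈ Ẑ → ∀ σ ∈ S, b u (σ − E σ) = 0`. -/
theorem stmt_7 {W : Type*} [AddCommGroup W] [Module ℝ W]
    (b : W →ₗ[ℝ] W →ₗ[ℝ] ℝ)
    (hsymm : ∀ x y : W, b x y = b y x)
    (hpsd : ∀ x : W, 0 ≤ b x x)
    (V S : Submodule ℝ W) [FiniteDimensional ℝ S]
    (hpd : ∀ s : S, s ≠ 0 → 0 < b (s : W) (s : W))
    (E : S →ₗ[ℝ] V)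
    (u : W) (hu : u ∈ V)
    (U : S) (hU : ∀ σ : S, b (U : W) (σ : W) = b u ((E σ : V) : W))
    (p : S) (hp : ∀ σ : S, b (p : W) (σ : W) = b u (σ : W)) :
    ((sInf {r : ℝ | ∃ s : S, r = b (u - (s : W)) (u - (s : W))} = 0 →
        b (u - (U : W)) (u - (U : W)) = 0) ↔
      (sInf {r : ℝ | ∃ s : S, r = b (u - (s : W)) (u - (s : W))} = 0 → U = p)) ∧
    ((sInf {r : ℝ | ∃ s : S, r = b (u - (s : W)) (u - (s : W))} = 0 → U = p) ↔
      (sInf {r : ℝ | ∃ s : S, r = b (u - (s : W)) (u - (s : W))} = 0 →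
        ∀ σ : S, b u ((σ : W) - ((E σ : V) : W)) = 0)) := by
  -- b (u - p) σ = 0 for σ ∈ S
  have horth : ∀ σ : S, b (u - (p : W)) (σ : W) = 0 := by
    intro σ
    have := hp σ
    simp only [map_sub, LinearMap.sub_apply]
    linarith [hsymm (p : W) (σ : W), hsymm u (σ : W), this]
  -- under the inf condition, b (u - p) (u - p) = 0
  have key : sInf {r : ℝ | ∃ s : S, r = b (u - (s : W)) (u - (s : W))} = 0 →
      b (u - (p : W)) (u - (p : W)) = 0 := by
    intro hZ
    by_contra hne
    have hA : 0 < b (u - (p : W)) (u - (p : W)) :=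
      lt_of_le_of_ne (hpsd _) (Ne.symm hne)
    set A := b (u - (p : W)) (u - (p : W)) with hAdef
    have hlb : ∀ r ∈ {r : ℝ | ∃ s : S, r = b (u - (s : W)) (u - (s : W))}, A ≤ r := by
      rintro r ⟨s, rfl⟩
      have h1 : b (u - (p : W)) (u - (s : W)) = A := by
        have h2 : (u : W) - (s : W) = (u - (p : W)) + ((p : W) - (s : W)) := by abel
        rw [h2]
        have h3 : b (u - (p : W)) ((p : W) - (s : W)) = 0 := by
          have := horth (p - s)
          simpa using this
        simp only [map_add]
        rw [h3]; ring
      have hcs := cs_aux b hsymm hpsd (u - (p : W)) (u - (s : W))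
      rw [h1] at hcs
      nlinarith [hpsd (u - (s : W))]
    have : A ≤ sInf {r : ℝ | ∃ s : S, r = b (u - (s : W)) (u - (s : W))} :=
      le_csInf ⟨A, p, rfl⟩ hlb
    rw [hZ] at this
    linarith
  -- equality of pieces: b (p - U) σ = b u (σ - Eσ)
  have hdiff : ∀ σ : S, b ((p : W) - (U : W)) (σ : W) = b u ((σ : W) - ((E σ : V) : W)) := by
    intro σ
    simp only [map_sub, LinearMap.sub_apply]
    rw [hp σ, hU σ]
  constructor
  · constructor
    · intro ha hZ
      have h0 := ha hZ
      have hp0 := key hZ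
      -- b(U - p, x) = 0 for all x, in particular x = U - p
      have h1 : b (u - (p : W)) ((U : W) - (p : W)) = 0 := bz_aux b hsymm hpsd _ _ hp0
      have h2 : b (u - (U : W)) ((U : W) - (p : W)) = 0 := bz_aux b hsymm hpsd _ _ h0
      have : b ((U : W) - (p : W)) ((U : W) - (p : W)) = 0 := by
        have e : b ((U : W) - (p : W)) ((U : W) - (p : W)) =
            b (u - (p : W)) ((U : W) - (p : W)) - b (u - (U : W)) ((U : W) - (p : W)) := by
          simp only [map_sub, LinearMap.sub_apply]; ring
        rw [e, h1, h2]; ring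
      have hsub : ((U - p : S) : W) = (U : W) - (p : W) := rfl
      by_contra hne
      have : U - p ≠ 0 := sub_ne_zero.mpr hne
      have := hpd (U - p) this
      rw [hsub] at this
      linarith
    · intro hb hZ
      have := hb hZ
      rw [this]
      exact key hZ
  · constructor
    · intro hb hZ σ
      rw [← hdiff σ, hb hZ]
      simp
    · intro hc hZ
      have h : ∀ σ : S, b ((p : W) - (U : W)) (σ : W) = 0 := fun σ => by
        rw [hdiff σ]; exact hc hZ σ
      have := h (p - U)
      have hsub : ((p - U : S) : W) = (p : W) - (U : W) := rfl
      rw [hsub] at this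
      by_contra hne
      have hne' : p - U ≠ 0 := sub_ne_zero.mpr (Ne.symm hne)
      have := hpd (p - U) hne'
      rw [hsub] at this
      linarith [h (p - U)]
end

section
/- Key identity in the proof of Proposition 4.6: assume ã(s, σ − Eσ) = st(s, σ) for all s, σ ∈ S (eq. (26)). If u ∈ V and U ∈ S satisfy ã(U, σ) = ã(u, Eσ) for all σ ∈ S, then for every σ ∈ S one has ã(U − Pu, σ) = c(u − Pu, Eσ − σ), where Pu ∈ S is the unique element with ã(Pu, τ) = ã(u, τ) for all τ ∈ S. -/
/-- Key identity in the proof of Proposition 4.6: under eq. (26), if `ã(U, σ) = ã(u, Eσ)` for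
all `σ ∈ S`, then `ã(U − Pu, σ) = c(u − Pu, Eσ − σ)` for every `σ ∈ S`, where `Pu ∈ S` is the
unique element with `ã(Pu, τ) = ã(u, τ)` for all `τ ∈ S`. -/
theorem stmt_10 {W : Type*} [AddCommGroup W] [Module ℝ W]
    (V S : Submodule ℝ W) [FiniteDimensional ℝ S]
    (c st : W →ₗ[ℝ] W →ₗ[ℝ] ℝ)
    (hcsymm : ∀ x y : W, c x y = c y x) (hcpsd : ∀ x : W, 0 ≤ c x x)
    (hstsymm : ∀ x y : W, st x y = st y x) (hstpsd : ∀ x : W, 0 ≤ st x x)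
    (hstV : ∀ x y : W, x ∈ V ∨ y ∈ V → st x y = 0)
    (hpd : ∀ s : S, s ≠ 0 → 0 < c (s : W) (s : W) + st (s : W) (s : W))
    (E : S →ₗ[ℝ] V)
    (h26 : ∀ s σ : S,
      c (s : W) ((σ : W) - ((E σ : V) : W)) + st (s : W) ((σ : W) - ((E σ : V) : W)) =
        st (s : W) (σ : W))
    (u : W) (hu : u ∈ V)
    (U : S) (hU : ∀ σ : S,
      c (U : W) (σ : W) + st (U : W) (σ : W) =
        c u ((E σ : V) : W) + st u ((E σ : V) : W))
    (p : S) (hp : ∀ τ : S,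
      c (p : W) (τ : W) + st (p : W) (τ : W) = c u (τ : W) + st u (τ : W)) :
    ∀ σ : S,
      c ((U : W) - (p : W)) (σ : W) + st ((U : W) - (p : W)) (σ : W) =
        c (u - (p : W)) (((E σ : V) : W) - (σ : W)) := by
  intro σ
  have h1 := hU σ
  have h2 := hp σ
  have h3 := h26 p σ
  have e1 : st u ((E σ : V) : W) = 0 := hstV _ _ (Or.inl hu)
  have e2 : st u (σ : W) = 0 := hstV _ _ (Or.inl hu)
  have e3 : st (p : W) ((E σ : V) : W) = 0 := hstV _ _ (Or.inr (E σ).2)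
  simp only [map_sub, LinearMap.sub_apply] at *
  linarith
end

section
/- Bound on the discrete deviation from the projection (final estimate in the proof of Proposition 4.6): assume ã(s, σ − Eσ) = st(s, σ) for all s, σ ∈ S (eq. (26)), and let C_H ≥ 0 satisfy c(σ − Eσ, σ − Eσ) ≤ C_H²·ã(σ, σ) for all σ ∈ S (eq. (28)). If u ∈ V and U ∈ S satisfy ã(U, σ) = ã(u, Eσ) for all σ ∈ S, then ã(U − Pu, U − Pu) ≤ C_H²·ã(u − Pu, u − Pu), where Pu ∈ S is the unique element with ã(Pu, τ) = ã(u, τ) for all τ ∈ S. -/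
/-- Cauchy–Schwarz for a symmetric positive semidefinite bilinear form. -/
lemma bilin_cauchy_schwarz {W : Type*} [AddCommGroup W] [Module ℝ W]
    (B : W →ₗ[ℝ] W →ₗ[ℝ] ℝ) (hs : ∀ x y : W, B x y = B y x)
    (hpsd : ∀ x : W, 0 ≤ B x x) (x y : W) :
    (B x y) ^ 2 ≤ B x x * B y y := by
  have key : ∀ t : ℝ, 0 ≤ B y y * (t * t) + (2 * B x y) * t + B x x := by
    intro t
    have h := hpsd (x + t • y)
    simp only [map_add, map_smul, LinearMap.add_apply, LinearMap.smul_apply,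
      smul_eq_mul] at h
    rw [hs y x] at h
    linear_combination h
  have hd := discrim_le_zero key
  unfold discrim at hd
  nlinarith [hd]

/-- Algebraic final step. -/
lemma real_final (CH L K s : ℝ) (hL0 : 0 ≤ L) (hK0 : 0 ≤ K) (hs0 : 0 ≤ s)
    (hLsq : L ^ 2 ≤ K * (CH ^ 2 * L)) : L ≤ CH ^ 2 * (K + s) := by
  rcases eq_or_lt_of_le hL0 with h | h
  · nlinarith [mul_nonneg (mul_nonneg (sq_nonneg CH) hK0) hL0]
  · have h2 : L ≤ CH ^ 2 * K :=
      le_of_mul_le_mul_right (by nlinarith) h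
    nlinarith [mul_nonneg (sq_nonneg CH) hs0]

/-- Bound on the discrete deviation from the projection (final estimate in the proof of
Proposition 4.6): under eq. (26) and the bound (28) with constant `C_H ≥ 0`, if
`ã(U, σ) = ã(u, Eσ)` for all `σ ∈ S`, then `ã(U − Pu, U − Pu) ≤ C_H² * ã(u − Pu, u − Pu)`,
where `Pu ∈ S` is the unique element with `ã(Pu, τ) = ã(u, τ)` for all `τ ∈ S`. -/
theorem stmt_12 {W : Type*} [AddCommGroup W] [Module ℝ W]
    (V S : Submodule ℝ W) [FiniteDimensional ℝ S]
    (c st : W →ₗ[ℝ] W →ₗ[ℝ] ℝ)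
    (hcsymm : ∀ x y : W, c x y = c y x) (hcpsd : ∀ x : W, 0 ≤ c x x)
    (hstsymm : ∀ x y : W, st x y = st y x) (hstpsd : ∀ x : W, 0 ≤ st x x)
    (hstV : ∀ x y : W, x ∈ V ∨ y ∈ V → st x y = 0)
    (hpd : ∀ s : S, s ≠ 0 → 0 < c (s : W) (s : W) + st (s : W) (s : W))
    (E : S →ₗ[ℝ] V)
    (h26 : ∀ s σ : S,
      c (s : W) ((σ : W) - ((E σ : V) : W)) + st (s : W) ((σ : W) - ((E σ : V) : W)) =
        st (s : W) (σ : W))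
    (CH : ℝ) (hCH : 0 ≤ CH)
    (h28 : ∀ σ : S,
      c ((σ : W) - ((E σ : V) : W)) ((σ : W) - ((E σ : V) : W)) ≤
        CH ^ 2 * (c (σ : W) (σ : W) + st (σ : W) (σ : W)))
    (u : W) (hu : u ∈ V)
    (U : S) (hU : ∀ σ : S,
      c (U : W) (σ : W) + st (U : W) (σ : W) =
        c u ((E σ : V) : W) + st u ((E σ : V) : W))
    (p : S) (hp : ∀ τ : S,
      c (p : W) (τ : W) + st (p : W) (τ : W) = c u (τ : W) + st u (τ : W)) :
    c ((U : W) - (p : W)) ((U : W) - (p : W)) + st ((U : W) - (p : W)) ((U : W) - (p : W)) ≤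
      CH ^ 2 * (c (u - (p : W)) (u - (p : W)) + st (u - (p : W)) (u - (p : W))) := by
  set e : S := U - p with he
  have hew : (e : W) = (U : W) - (p : W) := rfl
  set w : W := (U : W) - (p : W) with hw
  set v : W := ((E e : V) : W) with hv
  have hvV : v ∈ V := (E e).2
  -- st vanishes against u and v
  have stu : ∀ y : W, st u y = 0 := fun y => hstV u y (Or.inl hu)
  have stv : ∀ x : W, st x v = 0 := fun x => hstV x v (Or.inr hvV)
  -- expand hypotheses at e
  have hU' := hU e
  have hp' := hp e
  have h26' := h26 p e
  have h28' := h28 e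
  rw [hew] at hU' hp' h26' h28'
  rw [← hv] at hU' h26' h28'
  rw [stu] at hU'
  -- expand bilinearity
  have exp1 : c w w = c (U : W) w - c (p : W) w := by
    rw [hw]; simp only [map_sub, LinearMap.sub_apply]
    rw [hcsymm ((p : W)) ((U : W))]
  have exp2 : st w w = st (U : W) w - st (p : W) w := by
    rw [hw]; simp only [map_sub, LinearMap.sub_apply]
    rw [hstsymm ((p : W)) ((U : W))]
  have exp3 : c (p : W) (w - v) = c (p : W) w - c (p : W) v := by
    rw [map_sub]
  have exp4 : st (p : W) (w - v) = st (p : W) w - st (p : W) v := by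
    rw [map_sub]
  rw [exp3, exp4, stv] at h26'
  -- key identity :  ã(e,e) = c u v - c u w
  have key : c w w + st w w = c u v - c u w := by
    have := stu w
    linarith [exp1, exp2, hU', hp']
  -- and c u v - c u w = - c (u - p) (w - v)
  have key2 : c w w + st w w = - c (u - (p : W)) (w - v) := by
    have expL : c (u - (p : W)) (w - v) =
        c u w - c u v - c (p : W) w + c (p : W) v := by
      simp [map_sub]; ring
    rw [key, expL]
    linarith [h26']
  -- abbreviations
  set L : ℝ := c w w + st w w with hL
  set K : ℝ := c (u - (p : W)) (u - (p : W)) with hK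
  have hL0 : 0 ≤ L := by
    have := hcpsd w; have := hstpsd w; linarith
  have hK0 : 0 ≤ K := hcpsd _
  have hs0 : 0 ≤ st (u - (p : W)) (u - (p : W)) := hstpsd _
  -- Cauchy–Schwarz
  have cs := bilin_cauchy_schwarz c hcsymm hcpsd (u - (p : W)) (w - v)
  have hLsq : L ^ 2 ≤ K * (CH ^ 2 * L) := by
    have h1 : L ^ 2 = (c (u - (p : W)) (w - v)) ^ 2 := by
      rw [key2]; ring
    have h2 : (c (u - (p : W)) (w - v)) ^ 2 ≤ K * c (w - v) (w - v) := cs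
    have h3 : c (w - v) (w - v) ≤ CH ^ 2 * L := h28'
    nlinarith [hcpsd (w - v)]
  have := real_final CH L K (st (u - (p : W)) (u - (p : W))) hL0 hK0 hs0 hLsq
  linarith
end
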